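/- Let λ > 1 and α with 2α > 1. Define v(y) = (λ+1)e^{y(1+αy)}[(1+2αy)² + 2α] - 16λα. Then v(0) < 0, v is strictly increasing on [0,∞), and v(y) → ∞ as y → ∞; hence there exists a unique y₂ > 0 with v < 0 on [0, y₂) and v > 0 on (y₂, ∞). -/
import Mathlib


theorem v_properties (lam α : ℝ) (hlam : 1 < lam) (hα : 1 < 2 * α) :
    let v : ℝ → ℝ := fun y =>
      (lam + 1) * Real.exp (y * (1 + α * y)) * ((1 + 2 * α * y) ^ 2 + 2 * α) -
        16 * lam * α
    v 0 < 0 ∧ StrictMonoOn v (Set.Ici 0) ∧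
      Filter.Tendsto v Filter.atTop Filter.atTop ∧
      ∃! y₂ : ℝ, 0 < y₂ ∧ (∀ y ∈ Set.Ico 0 y₂, v y < 0) ∧
        (∀ y ∈ Set.Ioi y₂, 0 < v y) := by
  intro v
  have hα0 : 0 < α := by linarith
  -- v 0 < 0
  have hv0 : v 0 < 0 := by
    have : v 0 = (lam + 1) * (1 + 2 * α) - 16 * lam * α := by
      simp [v, Real.exp_zero]
    rw [this]
    nlinarith [mul_pos (by linarith : (0:ℝ) < lam - 1) (by linarith : (0:ℝ) < 2*α - 1)]
  -- strict monotonicity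
  have hmono : StrictMonoOn v (Set.Ici 0) := by
    intro a ha b hb hab
    simp only [Set.mem_Ici] at ha hb
    have hE : Real.exp (a * (1 + α * a)) < Real.exp (b * (1 + α * b)) := by
      apply Real.exp_lt_exp.mpr
      nlinarith [mul_pos hα0 (mul_pos (lt_of_le_of_lt ha hab) (sub_pos.mpr hab))]
    have hg : (1 + 2 * α * a) ^ 2 + 2 * α < (1 + 2 * α * b) ^ 2 + 2 * α := by
      nlinarith [mul_pos hα0 (sub_pos.mpr hab), mul_nonneg hα0.le ha]
    have hga : (0:ℝ) < (1 + 2 * α * a) ^ 2 + 2 * α := by positivity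
    have hEa := Real.exp_pos (a * (1 + α * a))
    have hEb := Real.exp_pos (b * (1 + α * b))
    have hprod : Real.exp (a * (1 + α * a)) * ((1 + 2 * α * a) ^ 2 + 2 * α) <
        Real.exp (b * (1 + α * b)) * ((1 + 2 * α * b) ^ 2 + 2 * α) :=
      mul_lt_mul hE hg.le hga hEb.le
    show _ < _
    simp only [v]
    have hl : (0:ℝ) < lam + 1 := by linarith
    nlinarith [mul_lt_mul_of_pos_left hprod hl]
  -- tendsto atTop
  have key : ∀ y : ℝ, 0 ≤ y → y + (2 - 16 * lam * α) ≤ v y := by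
    intro y hy
    have hE : 1 + y ≤ Real.exp (y * (1 + α * y)) := by
      have h1 : y ≤ y * (1 + α * y) := by nlinarith [mul_nonneg hα0.le (mul_nonneg hy hy)]
      have h2 := Real.add_one_le_exp (y * (1 + α * y))
      linarith
    have hg : 1 ≤ (1 + 2 * α * y) ^ 2 + 2 * α := by
      nlinarith [sq_nonneg (1 + 2 * α * y)]
    have hEpos := Real.exp_pos (y * (1 + α * y))
    have hX : 1 + y ≤ Real.exp (y * (1 + α * y)) * ((1 + 2 * α * y) ^ 2 + 2 * α) :=
      le_trans hE (le_mul_of_one_le_right hEpos.le hg)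
    have h3 := mul_le_mul_of_nonneg_left hX (by linarith : (0:ℝ) ≤ lam + 1)
    show y + (2 - 16 * lam * α) ≤ _
    simp only [v]
    nlinarith [mul_nonneg (by linarith : (0:ℝ) ≤ lam - 1) (by linarith : (0:ℝ) ≤ 1 + y)]
  have htend : Filter.Tendsto v Filter.atTop Filter.atTop := by
    apply Filter.tendsto_atTop_mono' _ (Filter.eventually_atTop.mpr ⟨0, key⟩)
    exact Filter.tendsto_atTop_add_const_right _ _ Filter.tendsto_id
  refine ⟨hv0, hmono, htend, ?_⟩
  -- existence of b with v b > 0 and b > 0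
  obtain ⟨b, hvb, hb⟩ := ((htend.eventually_gt_atTop 0).and (Filter.eventually_gt_atTop 0)).exists
  have hc : Continuous v := by
    simp only [v]
    continuity
  have hiv := intermediate_value_Ioo hb.le hc.continuousOn
  have h0mem : (0:ℝ) ∈ Set.Ioo (v 0) (v b) := ⟨hv0, hvb⟩
  obtain ⟨y₂, hy₂mem, hy₂0⟩ := hiv h0mem
  obtain ⟨hy₂pos, hy₂b⟩ := hy₂mem
  have hneg : ∀ y ∈ Set.Ico 0 y₂, v y < 0 := by
    intro y ⟨hy0, hyy₂⟩
    have := hmono (Set.mem_Ici.mpr hy0) (Set.mem_Ici.mpr hy₂pos.le) hyy₂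
    linarith
  have hpos : ∀ y ∈ Set.Ioi y₂, 0 < v y := by
    intro y hy
    simp only [Set.mem_Ioi] at hy
    have := hmono (Set.mem_Ici.mpr hy₂pos.le) (Set.mem_Ici.mpr (by linarith)) hy
    linarith
  refine ⟨y₂, ⟨hy₂pos, hneg, hpos⟩, ?_⟩
  rintro y' ⟨hy'pos, hneg', hpos'⟩
  rcases lt_trichotomy y' y₂ with h | h | h
  · exfalso
    have h1 := hneg ((y' + y₂) / 2) ⟨by linarith, by linarith⟩
    have h2 := hpos' ((y' + y₂) / 2) (by simp only [Set.mem_Ioi]; linarith)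
    linarith
  · exact h
  · exfalso
    have h1 := hneg' ((y₂ + y') / 2) ⟨by linarith, by linarith⟩
    have h2 := hpos ((y₂ + y') / 2) (by simp only [Set.mem_Ioi]; linarith)
    linarith
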